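/- Let p, q ∈ ℝⁿ with p ≠ q and let ω ∈ S^{n−1}. With (p′, q′) the Glassey–Strauss post-collisional momenta, the kernel is invariant: B_n(p, q, ω) = B_n(p′, q′, ω). -/

import Mathlib

noncomputable section

open MeasureTheory Metric Matrix

namespace RelBoltz

/-- The energy `p⁰ = √(c² + |p|²)` of a relativistic particle with momentum `p ∈ ℝⁿ`. -/
def energy (n : ℕ) (c : ℝ) (p : EuclideanSpace ℝ (Fin n)) : ℝ :=
  Real.sqrt (c ^ 2 + ‖p‖ ^ 2)

/-- The Euclidean dot product on `ℝⁿ`. -/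
def dot (n : ℕ) (p q : EuclideanSpace ℝ (Fin n)) : ℝ := ∑ i, p i * q i

/-- The relative momentum `ϱ(p,q) = √(2(p⁰q⁰ − p·q − c²))`. -/
def relMom (n : ℕ) (c : ℝ) (p q : EuclideanSpace ℝ (Fin n)) : ℝ :=
  Real.sqrt (2 * (energy n c p * energy n c q - dot n p q - c ^ 2))

/-- The quantity `s(p,q) = 2(p⁰q⁰ − p·q + c²)`. -/
def sQ (n : ℕ) (c : ℝ) (p q : EuclideanSpace ℝ (Fin n)) : ℝ :=
  2 * (energy n c p * energy n c q - dot n p q + c ^ 2)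

/-- The Minkowski metric `g = diag(−1, 1, …, 1)` as a `(1+n)×(1+n)` matrix. -/
def eta (n : ℕ) : Matrix (Fin (n + 1)) (Fin (n + 1)) ℝ :=
  Matrix.diagonal fun μ => if μ = 0 then -1 else 1

/-- A proper Lorentz transformation: `det Λ = 1` and `Λᵀ g Λ = g`. -/
def IsLorentz (n : ℕ) (Λ : Matrix (Fin (n + 1)) (Fin (n + 1)) ℝ) : Prop :=
  Λ.det = 1 ∧ Λᵀ * eta n * Λ = eta n

/-- The four-vector `p^μ = (p⁰, p) ∈ ℝ^{1+n}`. -/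
def fourVec (n : ℕ) (c : ℝ) (p : EuclideanSpace ℝ (Fin n)) : Fin (n + 1) → ℝ :=
  Fin.cons (energy n c p) fun i => p i

/-- Condition (CM): `Λ^μ_ν (p^ν + q^ν) = (√s, 0, …, 0)`. -/
def CM (n : ℕ) (c : ℝ) (Λ : Matrix (Fin (n + 1)) (Fin (n + 1)) ℝ)
    (p q : EuclideanSpace ℝ (Fin n)) : Prop :=
  Λ.mulVec (fourVec n c p + fourVec n c q) = Fin.cons (Real.sqrt (sQ n c p q)) (fun _ => (0 : ℝ))

/-- The candidate inverse `g Λᵀ g` of a Lorentz transformation. -/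
def Linv (n : ℕ) (Λ : Matrix (Fin (n + 1)) (Fin (n + 1)) ℝ) :
    Matrix (Fin (n + 1)) (Fin (n + 1)) ℝ :=
  eta n * Λᵀ * eta n

/-- The quantity `ρ = (p⁰+q⁰)/√s` appearing in the boost matrix. -/
def rhoB (n : ℕ) (c : ℝ) (p q : EuclideanSpace ℝ (Fin n)) : ℝ :=
  (energy n c p + energy n c q) / Real.sqrt (sQ n c p q)

/-- The boost matrix `Λ_b = [[ρ, −ρ vᵀ], [−ρ v, Iₙ + (ρ−1) v vᵀ/|v|²]]`
with `v = (p+q)/(p⁰+q⁰)`. -/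
def boost (n : ℕ) (c : ℝ) (p q : EuclideanSpace ℝ (Fin n)) :
    Matrix (Fin (n + 1)) (Fin (n + 1)) ℝ :=
  Matrix.of fun μ ν =>
    Fin.cases
      (Fin.cases (rhoB n c p q)
        (fun j => -rhoB n c p q * ((p j + q j) / (energy n c p + energy n c q))) ν)
      (fun i =>
        Fin.cases (-rhoB n c p q * ((p i + q i) / (energy n c p + energy n c q)))
          (fun j =>
            (if i = j then (1 : ℝ) else 0) +
              (rhoB n c p q - 1) *
                ((p i + q i) / (energy n c p + energy n c q)) *
                ((p j + q j) / (energy n c p + energy n c q)) /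
                (∑ k, ((p k + q k) / (energy n c p + energy n c q)) ^ 2)) ν) μ

/-- The vector `k ∈ ℝⁿ`, `k^i = Λ^i_μ (p^μ − q^μ)` (spatial rows of `Λ` applied
to `p^μ − q^μ`). -/
def kvec (n : ℕ) (c : ℝ) (Λ : Matrix (Fin (n + 1)) (Fin (n + 1)) ℝ)
    (p q : EuclideanSpace ℝ (Fin n)) : EuclideanSpace ℝ (Fin n) :=
  WithLp.toLp 2 fun i => Λ.mulVec (fourVec n c p - fourVec n c q) i.succ

/-- `ω̄^μ = (√s/2, (ϱ/2)ω)`. -/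
def wbar (n : ℕ) (c : ℝ) (p q ω : EuclideanSpace ℝ (Fin n)) : Fin (n + 1) → ℝ :=
  Fin.cons (Real.sqrt (sQ n c p q) / 2) fun i => (relMom n c p q / 2) * ω i

/-- `ω̃^μ = (√s/2, −(ϱ/2)ω)`. -/
def wtil (n : ℕ) (c : ℝ) (p q ω : EuclideanSpace ℝ (Fin n)) : Fin (n + 1) → ℝ :=
  Fin.cons (Real.sqrt (sQ n c p q) / 2) fun i => -(relMom n c p q / 2) * ω i

/-- The center-of-momentum post-collisional four-vector `p′^μ = (Λ⁻¹)^μ_ν ω̄^ν`. -/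
def postP (n : ℕ) (c : ℝ) (Λ : Matrix (Fin (n + 1)) (Fin (n + 1)) ℝ)
    (p q ω : EuclideanSpace ℝ (Fin n)) : Fin (n + 1) → ℝ :=
  (Linv n Λ).mulVec (wbar n c p q ω)

/-- The center-of-momentum post-collisional four-vector `q′^μ = (Λ⁻¹)^μ_ν ω̃^ν`. -/
def postQ (n : ℕ) (c : ℝ) (Λ : Matrix (Fin (n + 1)) (Fin (n + 1)) ℝ)
    (p q ω : EuclideanSpace ℝ (Fin n)) : Fin (n + 1) → ℝ :=
  (Linv n Λ).mulVec (wtil n c p q ω)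

/-- The spatial part of a vector in `ℝ^{1+n}`. -/
def spat (n : ℕ) (u : Fin (n + 1) → ℝ) : EuclideanSpace ℝ (Fin n) :=
  WithLp.toLp 2 fun i => u i.succ

/-- `D₁ = (p⁰+q⁰)² − (ω·(p+q))²`. -/
def D1 (n : ℕ) (c : ℝ) (p q ω : EuclideanSpace ℝ (Fin n)) : ℝ :=
  (energy n c p + energy n c q) ^ 2 - dot n ω (p + q) ^ 2

/-- `D₂ = (p⁰+q⁰){ω·(p⁰q − q⁰p)}`. -/
def D2 (n : ℕ) (c : ℝ) (p q ω : EuclideanSpace ℝ (Fin n)) : ℝ :=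
  (energy n c p + energy n c q) * dot n ω (energy n c p • q - energy n c q • p)

/-- `a(p,q,ω) = 2(p⁰+q⁰){ω·(p⁰q − q⁰p)}/D₁`. -/
def aGS (n : ℕ) (c : ℝ) (p q ω : EuclideanSpace ℝ (Fin n)) : ℝ :=
  2 * (energy n c p + energy n c q) * dot n ω (energy n c p • q - energy n c q • p) /
    D1 n c p q ω

/-- `N⁰(p,q,ω) = 2{ω·(p+q)}{ω·(p⁰q − q⁰p)}/D₁`. -/
def N0 (n : ℕ) (c : ℝ) (p q ω : EuclideanSpace ℝ (Fin n)) : ℝ :=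
  2 * dot n ω (p + q) * dot n ω (energy n c p • q - energy n c q • p) / D1 n c p q ω

/-- The Glassey–Strauss post-collisional momentum `p′ = p + a(p,q,ω)ω`. -/
def gsP (n : ℕ) (c : ℝ) (p q ω : EuclideanSpace ℝ (Fin n)) : EuclideanSpace ℝ (Fin n) :=
  p + aGS n c p q ω • ω

/-- The Glassey–Strauss post-collisional momentum `q′ = q − a(p,q,ω)ω`. -/
def gsQ (n : ℕ) (c : ℝ) (p q ω : EuclideanSpace ℝ (Fin n)) : EuclideanSpace ℝ (Fin n) :=
  q - aGS n c p q ω • ω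

/-- The Glassey–Strauss kernel `B(p,q,ω)`. -/
def BGS (n : ℕ) (c : ℝ) (p q ω : EuclideanSpace ℝ (Fin n)) : ℝ :=
  c * (energy n c p + energy n c q) ^ 2 * energy n c p * energy n c q *
    |dot n ω ((energy n c p)⁻¹ • p - (energy n c q)⁻¹ • q)| / D1 n c p q ω ^ 2

/-- The dimensional factor `A(p,q,ω)`. -/
def AGS (n : ℕ) (c : ℝ) (p q ω : EuclideanSpace ℝ (Fin n)) : ℝ :=
  (4 / relMom n c p q) * (energy n c p + energy n c q) * energy n c p * energy n c q *
    |dot n ω ((energy n c p)⁻¹ • p - (energy n c q)⁻¹ • q)| / D1 n c p q ω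

/-- The dimensional Glassey–Strauss kernel `B_n(p,q,ω) = B(p,q,ω)·(A(p,q,ω))^{n−3}`. -/
def Bn (n : ℕ) (c : ℝ) (p q ω : EuclideanSpace ℝ (Fin n)) : ℝ :=
  BGS n c p q ω * AGS n c p q ω ^ ((n : ℤ) - 3)

/-- The Møller velocity `v_ø(p,q) = (c/4) ϱ √s / (p⁰q⁰)`. -/
def moller (n : ℕ) (c : ℝ) (p q : EuclideanSpace ℝ (Fin n)) : ℝ :=
  (c / 4) * relMom n c p q * Real.sqrt (sQ n c p q) / (energy n c p * energy n c q)

/-- The explicit boost form of the combination appearing in the center-of-momentum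
post-collisional momenta. -/
def cmDir (n : ℕ) (c : ℝ) (p q ω : EuclideanSpace ℝ (Fin n)) : EuclideanSpace ℝ (Fin n) :=
  ω + ((rhoB n c p q - 1) * dot n (p + q) ω / ‖p + q‖ ^ 2) • (p + q)

/-- The explicit boost form of the center-of-momentum post-collisional momentum `p′`. -/
def cmP (n : ℕ) (c : ℝ) (p q ω : EuclideanSpace ℝ (Fin n)) : EuclideanSpace ℝ (Fin n) :=
  (1 / 2 : ℝ) • (p + q) + (relMom n c p q / 2) • cmDir n c p q ω

/-- The explicit boost form of the center-of-momentum post-collisional momentum `q′`. -/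
def cmQ (n : ℕ) (c : ℝ) (p q ω : EuclideanSpace ℝ (Fin n)) : EuclideanSpace ℝ (Fin n) :=
  (1 / 2 : ℝ) • (p + q) - (relMom n c p q / 2) • cmDir n c p q ω

/-- The explicit boost form of the vector `k`. -/
def kB (n : ℕ) (c : ℝ) (p q : EuclideanSpace ℝ (Fin n)) : EuclideanSpace ℝ (Fin n) :=
  (-(energy n c p - energy n c q) / Real.sqrt (sQ n c p q)) • (p + q) + (p - q) +
    ((rhoB n c p q - 1) * dot n (p + q) (p - q) / ‖p + q‖ ^ 2) • (p + q)

/-- The center-of-momentum scattering angle `cos θ_cm = (k/|k|)·ω`. -/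
def cosCM (n : ℕ) (c : ℝ) (p q ω : EuclideanSpace ℝ (Fin n)) : ℝ :=
  dot n (kB n c p q) ω / ‖kB n c p q‖

/-- The Glassey–Strauss scattering angle
`cos θ_gs = 1 − 8{ω·(p⁰q − q⁰p)}²/(D₁ϱ²)`. -/
def cosGS (n : ℕ) (c : ℝ) (p q ω : EuclideanSpace ℝ (Fin n)) : ℝ :=
  1 - 8 * dot n ω (energy n c p • q - energy n c q • p) ^ 2 /
    (D1 n c p q ω * relMom n c p q ^ 2)

/-- The surface measure on the unit sphere `S^{n−1} ⊂ ℝⁿ`. -/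
def sphMeasure (n : ℕ) : Measure (sphere (0 : EuclideanSpace ℝ (Fin n)) 1) :=
  (volume : Measure (EuclideanSpace ℝ (Fin n))).toSphere


section Aux
variable {n : ℕ} {c : ℝ}

lemma dot_eq_inner (p q : EuclideanSpace ℝ (Fin n)) : dot n p q = inner ℝ p q := by
  simp [dot, PiLp.inner_apply, RCLike.inner_apply, mul_comm]

lemma dot_add_right (p x y : EuclideanSpace ℝ (Fin n)) :
    dot n p (x + y) = dot n p x + dot n p y := by
  simp [dot, mul_add, Finset.sum_add_distrib]

lemma dot_sub_right (p x y : EuclideanSpace ℝ (Fin n)) :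
    dot n p (x - y) = dot n p x - dot n p y := by
  simp [dot, mul_sub, Finset.sum_sub_distrib]

lemma dot_smul_right (p x : EuclideanSpace ℝ (Fin n)) (r : ℝ) :
    dot n p (r • x) = r * dot n p x := by
  simp [dot, Finset.mul_sum, mul_left_comm]

lemma dot_comm' (p q : EuclideanSpace ℝ (Fin n)) : dot n p q = dot n q p := by
  simp [dot, mul_comm]

lemma energy_sq (hc : 0 < c) (p : EuclideanSpace ℝ (Fin n)) :
    energy n c p ^ 2 = c ^ 2 + ‖p‖ ^ 2 :=
  Real.sq_sqrt (by positivity)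

lemma energy_pos (hc : 0 < c) (p : EuclideanSpace ℝ (Fin n)) : 0 < energy n c p :=
  Real.sqrt_pos.2 (by positivity)

lemma norm_lt_energy (hc : 0 < c) (p : EuclideanSpace ℝ (Fin n)) : ‖p‖ < energy n c p := by
  have h : ‖p‖ = Real.sqrt (‖p‖ ^ 2) := (Real.sqrt_sq (norm_nonneg p)).symm
  rw [h, energy]
  exact Real.sqrt_lt_sqrt (by positivity) (by nlinarith)

lemma dot_sq_le (ω p : EuclideanSpace ℝ (Fin n)) (hω : ‖ω‖ = 1) :
    dot n ω p ^ 2 ≤ ‖p‖ ^ 2 := by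
  have h := abs_real_inner_le_norm ω p
  rw [hω, one_mul] at h
  calc dot n ω p ^ 2 = |dot n ω p| ^ 2 := (sq_abs _).symm
    _ ≤ ‖p‖ ^ 2 := by
        rw [dot_eq_inner]; exact pow_le_pow_left₀ (abs_nonneg _) h 2

lemma dot_self_one (ω : EuclideanSpace ℝ (Fin n)) (hω : ‖ω‖ = 1) : dot n ω ω = 1 := by
  rw [dot_eq_inner, real_inner_self_eq_norm_sq, hω]; norm_num

lemma abs_trick (e1 e2 α β : ℝ) (h1 : 0 < e1) (h2 : 0 < e2) :
    e1 * e2 * |e1⁻¹ * α - e2⁻¹ * β| = |e1 * β - e2 * α| := by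
  rw [← abs_of_pos (mul_pos h1 h2), ← abs_mul, abs_sub_comm]
  congr 1
  field_simp

lemma relMom_eq (hc : 0 < c) (x y : EuclideanSpace ℝ (Fin n)) :
    relMom n c x y =
      Real.sqrt ((energy n c x + energy n c y) ^ 2 - ‖x + y‖ ^ 2 - 4 * c ^ 2) := by
  rw [relMom]
  congr 1
  have h1 := energy_sq hc x
  have h2 := energy_sq hc y
  have h3 : ‖x + y‖ ^ 2 = ‖x‖ ^ 2 + 2 * dot n x y + ‖y‖ ^ 2 := by
    rw [dot_eq_inner]; exact norm_add_sq_real x y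
  linear_combination h3 - h1 - h2

end Aux

set_option maxHeartbeats 1600000

/-- the Glassey–Strauss kernel is invariant under the pre-post
collisional map: `B_n(p, q, ω) = B_n(p′, q′, ω)`. -/
theorem statement15 (n : ℕ) (hn : 2 ≤ n) (c : ℝ) (hc : 0 < c)
    (p q : EuclideanSpace ℝ (Fin n)) (hpq : p ≠ q)
    (ω : EuclideanSpace ℝ (Fin n)) (hω : ‖ω‖ = 1) :
    Bn n c p q ω = Bn n c (gsP n c p q ω) (gsQ n c p q ω) ω := by
  have he1p := energy_pos hc p
  have he2p := energy_pos hc q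
  have hαle := dot_sq_le ω p hω
  have hβle := dot_sq_le ω q hω
  have he1sq := energy_sq hc p
  have he2sq := energy_sq hc q
  have hnp := norm_lt_energy hc p
  have hnq := norm_lt_energy hc q
  have hωω : dot n ω ω = 1 := dot_self_one ω hω
  set e1 := energy n c p with he1d
  set e2 := energy n c q with he2d
  set α := dot n ω p with hαd
  set β := dot n ω q with hβd
  set E := e1 + e2 with hEd
  set u := α + β with hud
  set g := e1 * β - e2 * α with hgd
  set D := E ^ 2 - u ^ 2 with hDd
  have hdotpq : dot n ω (p + q) = u := by rw [dot_add_right, ← hαd, ← hβd, hud]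
  have hupq : dot n ω (p + q) ^ 2 ≤ ‖p + q‖ ^ 2 := dot_sq_le ω (p + q) hω
  have hDpos : 0 < D := by
    rw [hDd]
    have h2 : ‖p + q‖ ≤ ‖p‖ + ‖q‖ := norm_add_le p q
    rw [hdotpq] at hupq
    have hn0 : (0:ℝ) ≤ ‖p + q‖ := norm_nonneg _
    have hn1 : (0:ℝ) ≤ ‖p‖ := norm_nonneg _
    have hn2 : (0:ℝ) ≤ ‖q‖ := norm_nonneg _
    rw [hEd]
    have h3 : ‖p + q‖ ^ 2 ≤ (‖p‖ + ‖q‖) ^ 2 := pow_le_pow_left₀ hn0 h2 2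
    have h4 : (‖p‖ + ‖q‖) ^ 2 < (e1 + e2) ^ 2 :=
      pow_lt_pow_left₀ (add_lt_add hnp hnq) (by positivity) (by norm_num)
    linarith
  have hDne : D ≠ 0 := ne_of_gt hDpos
  have hDexp : (e1 + e2) ^ 2 - (α + β) ^ 2 ≠ 0 := by
    rw [← hEd, ← hud]; exact hDne
  have hgdot : dot n ω (e1 • q - e2 • p) = g := by
    rw [dot_sub_right, dot_smul_right, dot_smul_right, ← hαd, ← hβd, hgd]
  set a := 2 * E * g / D with had
  set N := 2 * u * g / D with hNd
  have haval : aGS n c p q ω = a := by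
    simp only [aGS]
    rw [← he1d, ← he2d, hgdot]
    simp only [D1]
    rw [← he1d, ← he2d, hdotpq, ← hEd, ← hDd, had]
  have hD1 : D1 n c p q ω = D := by
    simp only [D1]
    rw [← he1d, ← he2d, hdotpq, ← hEd, hDd]
  have hgsP : gsP n c p q ω = p + a • ω := by rw [gsP, haval]
  have hgsQ : gsQ n c p q ω = q - a • ω := by rw [gsQ, haval]
  have hsum : gsP n c p q ω + gsQ n c p q ω = p + q := by
    rw [hgsP, hgsQ]; abel
  -- energies of post-collisional momenta
  have hnormP : ‖p + a • ω‖ ^ 2 = ‖p‖ ^ 2 + 2 * a * α + a ^ 2 := by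
    rw [norm_add_sq_real, real_inner_smul_right, ← dot_eq_inner, dot_comm', ← hαd,
      norm_smul, Real.norm_eq_abs, hω, mul_one, sq_abs]
    ring
  have hnormQ : ‖q - a • ω‖ ^ 2 = ‖q‖ ^ 2 - 2 * a * β + a ^ 2 := by
    rw [norm_sub_sq_real, real_inner_smul_right, ← dot_eq_inner, dot_comm', ← hβd,
      norm_smul, Real.norm_eq_abs, hω, mul_one, sq_abs]
    ring
  have hkey1 : e1 * (e1 * D + 2 * u * g) = g ^ 2 + E ^ 2 * (e1 ^ 2 - α ^ 2) := by
    rw [hDd, hud, hEd, hgd]; ring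
  have hkey2 : e2 * (e2 * D - 2 * u * g) = g ^ 2 + E ^ 2 * (e2 ^ 2 - β ^ 2) := by
    rw [hDd, hud, hEd, hgd]; ring
  have hEpos : 0 < E := by rw [hEd]; linarith
  have hc2a : c ^ 2 ≤ e1 ^ 2 - α ^ 2 := by rw [he1sq]; linarith
  have hc2b : c ^ 2 ≤ e2 ^ 2 - β ^ 2 := by rw [he2sq]; linarith
  have hposP : 0 < e1 + N := by
    have hnum : 0 < e1 * D + 2 * u * g := by
      have h : 0 < e1 * (e1 * D + 2 * u * g) := by
        rw [hkey1]
        have h2 := mul_pos (pow_pos hEpos 2) (lt_of_lt_of_le (pow_pos hc 2) hc2a)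
        linarith [sq_nonneg g]
      by_contra hle
      push_neg at hle
      exact absurd h (not_lt.2 (mul_nonpos_of_nonneg_of_nonpos he1p.le hle))
    have heq : e1 + N = (e1 * D + 2 * u * g) / D := by
      rw [hNd]; field_simp
    rw [heq]
    exact div_pos hnum hDpos
  have hposQ : 0 < e2 - N := by
    have hnum : 0 < e2 * D - 2 * u * g := by
      have h : 0 < e2 * (e2 * D - 2 * u * g) := by
        rw [hkey2]
        have h2 := mul_pos (pow_pos hEpos 2) (lt_of_lt_of_le (pow_pos hc 2) hc2b)
        linarith [sq_nonneg g]
      by_contra hle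
      push_neg at hle
      exact absurd h (not_lt.2 (mul_nonpos_of_nonneg_of_nonpos he2p.le hle))
    have heq : e2 - N = (e2 * D - 2 * u * g) / D := by
      rw [hNd]; field_simp
    rw [heq]
    exact div_pos hnum hDpos
  have he1' : energy n c (gsP n c p q ω) = e1 + N := by
    rw [hgsP]
    simp only [energy]
    rw [hnormP]
    have hsq : c ^ 2 + (‖p‖ ^ 2 + 2 * a * α + a ^ 2) = (e1 + N) ^ 2 := by
      have h0 : c ^ 2 + ‖p‖ ^ 2 = e1 ^ 2 := he1sq.symm
      rw [show c ^ 2 + (‖p‖ ^ 2 + 2 * a * α + a ^ 2)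
            = (c ^ 2 + ‖p‖ ^ 2) + (2 * a * α + a ^ 2) by ring, h0,
        had, hNd, hDd, hgd, hud, hEd]
      field_simp
      ring
    rw [hsq, Real.sqrt_sq hposP.le]
  have he2' : energy n c (gsQ n c p q ω) = e2 - N := by
    rw [hgsQ]
    simp only [energy]
    rw [hnormQ]
    have hsq : c ^ 2 + (‖q‖ ^ 2 - 2 * a * β + a ^ 2) = (e2 - N) ^ 2 := by
      have h0 : c ^ 2 + ‖q‖ ^ 2 = e2 ^ 2 := he2sq.symm
      rw [show c ^ 2 + (‖q‖ ^ 2 - 2 * a * β + a ^ 2)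
            = (c ^ 2 + ‖q‖ ^ 2) + (-(2 * a * β) + a ^ 2) by ring, h0,
        had, hNd, hDd, hgd, hud, hEd]
      field_simp
      ring
    rw [hsq, Real.sqrt_sq hposQ.le]
  have hdotP' : dot n ω (gsP n c p q ω) = α + a := by
    rw [hgsP, dot_add_right, dot_smul_right, hωω, ← hαd, mul_one]
  have hdotQ' : dot n ω (gsQ n c p q ω) = β - a := by
    rw [hgsQ, dot_sub_right, dot_smul_right, hωω, ← hβd, mul_one]
  have hD1' : D1 n c (gsP n c p q ω) (gsQ n c p q ω) ω = D := by
    simp only [D1]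
    rw [he1', he2', hsum, hdotpq, hDd]
    ring_nf
    rw [hEd]; ring
  have hgflip : (e1 + N) * (β - a) - (e2 - N) * (α + a) = -g := by
    rw [had, hNd, hDd, hgd, hud, hEd]
    field_simp
    ring
  have hrho : relMom n c (gsP n c p q ω) (gsQ n c p q ω) = relMom n c p q := by
    rw [relMom_eq hc, relMom_eq hc, hsum, he1', he2', ← he1d, ← he2d]
    congr 2
    ring
  -- rewrite the kernels
  have hBGS : BGS n c p q ω = c * E ^ 2 * |g| / D ^ 2 := by
    simp only [BGS]
    rw [dot_sub_right, dot_smul_right, dot_smul_right, ← he1d, ← he2d, ← hαd, ← hβd, hD1]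
    congr 1
    rw [hgd, ← abs_trick e1 e2 α β he1p he2p, hEd]
    ring
  have hBGS' : BGS n c (gsP n c p q ω) (gsQ n c p q ω) ω = c * E ^ 2 * |g| / D ^ 2 := by
    simp only [BGS]
    rw [dot_sub_right, dot_smul_right, dot_smul_right, he1', he2', hdotP', hdotQ', hD1']
    congr 1
    have habs : |g| = (e1 + N) * (e2 - N) * |(e1 + N)⁻¹ * (α + a) - (e2 - N)⁻¹ * (β - a)| := by
      rw [abs_trick (e1 + N) (e2 - N) (α + a) (β - a) hposP hposQ, hgflip, abs_neg]
    rw [habs, hEd]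
    ring
  have hAGS : AGS n c p q ω = 4 / relMom n c p q * E * |g| / D := by
    simp only [AGS]
    rw [dot_sub_right, dot_smul_right, dot_smul_right, ← he1d, ← he2d, ← hαd, ← hβd, hD1]
    congr 1
    rw [hgd, ← abs_trick e1 e2 α β he1p he2p, hEd]
    ring
  have hAGS' : AGS n c (gsP n c p q ω) (gsQ n c p q ω) ω
      = 4 / relMom n c p q * E * |g| / D := by
    simp only [AGS]
    rw [dot_sub_right, dot_smul_right, dot_smul_right, he1', he2', hdotP', hdotQ',
      hD1', hrho]
    congr 1
    have habs : |g| = (e1 + N) * (e2 - N) * |(e1 + N)⁻¹ * (α + a) - (e2 - N)⁻¹ * (β - a)| := by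
      rw [abs_trick (e1 + N) (e2 - N) (α + a) (β - a) hposP hposQ, hgflip, abs_neg]
    rw [habs, hEd]
    ring
  rw [Bn, Bn, hBGS, hBGS', hAGS, hAGS']


end RelBoltz
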